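/- Let r, s, t ≥ 1 and let α: [s] → [r] and β: [t] → [r] satisfy |α(i+1)−α(i)| ≤ 1 for all i and |β(j+1)−β(j)| ≤ 1 for all j (relation-preserving maps, not necessarily surjective). Color a cell (i,j) of the chessboard [s]×[t] black iff α(i) = β(j). If α(1) = 1, β(1) = β(t) = 1, and the range of β is contained in the range of α, then there is a black 8-path from (1,1) to (1,t). -/

import Mathlib

/-- The chessboard `[s] × [t]`. -/
def board (s t : ℕ) : Set (ℕ × ℕ) :=
  {c | 1 ≤ c.1 ∧ c.1 ≤ s ∧ 1 ≤ c.2 ∧ c.2 ≤ t}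

/-- 8-adjacency of cells. -/
def adj8 (c d : ℕ × ℕ) : Prop :=
  c ≠ d ∧ Nat.dist c.1 d.1 ≤ 1 ∧ Nat.dist c.2 d.2 ≤ 1

/-- There is a path of cells, each satisfying `good`, from the set `A` to the
set `B`, with consecutive cells related by `adj`. -/
def PathBetween (adj : ℕ × ℕ → ℕ × ℕ → Prop) (good : ℕ × ℕ → Prop)
    (A B : Set (ℕ × ℕ)) : Prop :=
  ∃ (L : ℕ) (σ : ℕ → ℕ × ℕ), σ 0 ∈ A ∧ σ L ∈ B ∧
    (∀ i ≤ L, good (σ i)) ∧ ∀ i < L, adj (σ i) (σ (i + 1))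

/-- If `α : [s] → [r]` and `β : [t] → [r]` are relation-preserving,
`α 1 = 1`, `β 1 = β t = 1` and `rng β ⊆ rng α`, then in the chessboard `[s]×[t]`
colored black at `(i,j)` iff `α i = β j` there is a black 8-path from `(1,1)`
to `(1,t)`. -/
lemma dist_le_one_iff (a b : ℕ) : Nat.dist a b ≤ 1 ↔ (a = b ∨ a = b + 1 ∨ b = a + 1) := by
  simp [Nat.dist]; omega

lemma dist_eq_one_iff (a b : ℕ) : Nat.dist a b = 1 ↔ (a = b + 1 ∨ b = a + 1) := by
  simp [Nat.dist]; omega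

lemma pathBetween_cons (good : ℕ × ℕ → Prop) (A B : Set (ℕ × ℕ)) (x y : ℕ × ℕ)
    (hx : good x) (hxy : adj8 x y) (hA : x ∈ A)
    (h : PathBetween adj8 good {y} B) : PathBetween adj8 good A B := by
  obtain ⟨L, σ, h0, hL, hg, hs⟩ := h
  refine ⟨L + 1, fun k => if k = 0 then x else σ (k - 1), by simpa, by simpa using hL, ?_, ?_⟩
  · intro i hi
    rcases Nat.eq_zero_or_pos i with rfl | hi'
    · simpa using hx
    · simp only [Nat.pos_iff_ne_zero] at hi'
      simp only [hi', if_neg]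
      exact hg _ (by omega)
  · intro i hi
    rcases Nat.eq_zero_or_pos i with rfl | hi'
    · simp only [if_pos rfl]
      have : σ 0 = y := h0
      simpa [this] using hxy
    · simp only [Nat.pos_iff_ne_zero] at hi'
      simp [hi']
      have h2 := hs (i-1) (by omega)
      rwa [show i - 1 + 1 = i by omega] at h2

lemma pathBetween_of_lazy (good : ℕ × ℕ → Prop) (B : Set (ℕ × ℕ)) :
    ∀ (L : ℕ) (σ : ℕ → ℕ × ℕ) (A : Set (ℕ × ℕ)), σ 0 ∈ A → σ L ∈ B → (∀ i ≤ L, good (σ i)) →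
    (∀ i < L, σ i = σ (i + 1) ∨ adj8 (σ i) (σ (i + 1))) → PathBetween adj8 good A B := by
  intro L
  induction L with
  | zero => intro σ A h0 hL hg _; exact ⟨0, σ, h0, hL, hg, fun i hi => absurd hi (by omega)⟩
  | succ n ih =>
    intro σ A h0 hL hg hs
    rcases hs 0 (by omega) with he | ha
    · exact ih (fun k => σ (k + 1)) A (by simpa [← he] using h0) hL
        (fun i hi => hg (i + 1) (by omega)) (fun i hi => hs (i + 1) (by omega))
    · refine pathBetween_cons good A B (σ 0) (σ 1) (hg 0 (by omega)) ha h0 ?_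
      exact ih (fun k => σ (k + 1)) {σ 1} rfl hL
        (fun i hi => hg (i + 1) (by omega)) (fun i hi => hs (i + 1) (by omega))

lemma reachable_toPath {V : Type*} (G : SimpleGraph V) (f : V → ℕ × ℕ) (good : ℕ × ℕ → Prop)
    (hadj : ∀ u w, G.Adj u w → good (f u) ∧ good (f w) ∧ adj8 (f u) (f w)) :
    ∀ {u w : V}, G.Walk u w → good (f u) →
    ∃ (L : ℕ) (σ : ℕ → ℕ × ℕ), σ 0 = f u ∧ σ L = f w ∧ (∀ i ≤ L, good (σ i)) ∧
      (∀ i < L, adj8 (σ i) (σ (i + 1))) := by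
  intro u w p
  induction p with
  | nil => exact fun hu => ⟨0, fun _ => f _, rfl, rfl, fun i _ => hu, fun i hi => absurd hi (by omega)⟩
  | @cons u v w h p ih =>
    intro hu
    obtain ⟨L, σ, h0, hL, hg, hstep⟩ := ih (hadj _ _ h).2.1
    refine ⟨L + 1, fun k => if k = 0 then f u else σ (k - 1), by simp, by simp [hL], ?_, ?_⟩
    · intro i hi
      rcases Nat.eq_zero_or_pos i with rfl | hi'
      · simpa using hu
      · simp only [Nat.pos_iff_ne_zero] at hi'
        simp only [hi', if_neg]
        exact hg _ (by omega)
    · intro i hi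
      rcases Nat.eq_zero_or_pos i with rfl | hi'
      · simpa [h0] using (hadj _ _ h).2.2
      · simp only [Nat.pos_iff_ne_zero] at hi'
        simp [hi']
        have h2 := hstep (i - 1) (by omega)
        rwa [show i - 1 + 1 = i by omega] at h2

def Blk (s t : ℕ) (α β : ℕ → ℕ) : ℕ × ℕ → Prop := fun c =>
  1 ≤ c.1 ∧ c.1 ≤ s ∧ 1 ≤ c.2 ∧ c.2 ≤ t ∧ α c.1 = β c.2

section Core

variable (s t M : ℕ) (α β : ℕ → ℕ)

variable (hM : 3 ≤ M) (hs3 : 3 ≤ s) (ht3 : 3 ≤ t)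
    (hα1 : α 1 = 1) (hαs : α s = M)
    (hαlb : ∀ i, 1 ≤ i → i ≤ s → 1 ≤ α i)
    (hαub : ∀ i, 1 ≤ i → i < s → α i + 1 ≤ M)
    (hβ1 : β 1 = 1) (hβt : β t = 1)
    (hβlb : ∀ j, 1 ≤ j → j ≤ t → 1 ≤ β j)
    (hβub : ∀ j, 1 ≤ j → j ≤ t → β j ≤ M)
    (hαstep : ∀ i, 1 ≤ i → i + 1 ≤ s → α (i + 1) = α i + 1 ∨ α i = α (i + 1) + 1)
    (hβstep : ∀ j, 1 ≤ j → j + 1 ≤ t → β (j + 1) = β j + 1 ∨ β j = β (j + 1) + 1)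

include hαstep hβstep in
lemma blk_diag (p q : ℕ × ℕ) (hp : Blk s t α β p) (hq : Blk s t α β q)
    (h : adj8 p q) : (p.1 = q.1 + 1 ∨ q.1 = p.1 + 1) ∧ (p.2 = q.2 + 1 ∨ q.2 = p.2 + 1) := by
  obtain ⟨hp1, hp2, hp3, hp4, hp5⟩ := hp
  obtain ⟨hq1, hq2, hq3, hq4, hq5⟩ := hq
  obtain ⟨hne, hd1, hd2⟩ := h
  rw [dist_le_one_iff] at hd1 hd2
  have h1 : p.1 ≠ q.1 := by
    intro h
    have hbb : β p.2 = β q.2 := by rw [← hp5, ← hq5, h]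
    have hne2 : p.2 ≠ q.2 := fun h2 => hne (Prod.ext h h2)
    rcases hd2 with h2 | h2 | h2
    · exact hne2 h2
    · have := hβstep q.2 hq3 (by omega)
      rw [← h2] at this; omega
    · have := hβstep p.2 hp3 (by omega)
      rw [← h2] at this; omega
  have h2 : p.2 ≠ q.2 := by
    intro h
    have hbb : α p.1 = α q.1 := by rw [hp5, hq5, h]
    rcases hd1 with h2 | h2 | h2
    · exact h1 h2
    · have := hαstep q.1 hq1 (by omega)
      rw [← h2] at this; omega
    · have := hαstep p.1 hp1 (by omega)
      rw [← h2] at this; omega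
  exact ⟨by omega, by omega⟩

lemma parity4 (v a a' b b' : ℕ) (ha : a = v + 1 ∨ v = a + 1) (ha' : a' = v + 1 ∨ v = a' + 1)
    (hb : b = v + 1 ∨ v = b + 1) (hb' : b' = v + 1 ∨ v = b' + 1)
    (n1 n2 n3 n4 : ℕ)
    (h1 : (a = b ∧ n1 = 1) ∨ (¬(a = b) ∧ n1 = 0))
    (h2 : (a' = b' ∧ n2 = 1) ∨ (¬(a' = b') ∧ n2 = 0))
    (h3 : (a = b' ∧ n3 = 1) ∨ (¬(a = b') ∧ n3 = 0))
    (h4 : (a' = b ∧ n4 = 1) ∨ (¬(a' = b) ∧ n4 = 0)) :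
    Even (n1 + n2 + n3 + n4) := by
  rw [Nat.even_iff]
  rcases ha with h | h <;> rcases ha' with h' | h' <;> rcases hb with g | g <;> rcases hb' with g' | g' <;>
    omega

set_option maxHeartbeats 1600000 in
include hM hs3 ht3 hα1 hαs hαlb hαub hβ1 hβt hβlb hβub hαstep hβstep in
lemma core :
    ∃ (L : ℕ) (σ : ℕ → ℕ × ℕ), σ 0 = (1, 1) ∧ σ L = (1, t) ∧
      (∀ i ≤ L, Blk s t α β (σ i)) ∧ (∀ i < L, adj8 (σ i) (σ (i + 1))) := by
  classical
  -- basic value facts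
  have hα2 : α 2 = 2 := by
    have h := hαstep 1 (by omega) (by omega)
    norm_num at h
    have h2 := hαlb 2 (by omega) (by omega)
    omega
  have hβ2 : β 2 = 2 := by
    have h := hβstep 1 (by omega) (by omega)
    norm_num at h
    have h2 := hβlb 2 (by omega) (by omega)
    omega
  have hβt1 : β (t - 1) = 2 := by
    have h := hβstep (t - 1) (by omega) (by omega)
    have h2 := hβlb (t - 1) (by omega) (by omega)
    rw [show t - 1 + 1 = t by omega] at h
    omega
  have hαs1 : α (s - 1) + 1 = M := by
    have h := hαstep (s - 1) (by omega) (by omega)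
    have h2 := hαub (s - 1) (by omega) (by omega)
    rw [show s - 1 + 1 = s by omega] at h
    omega
  -- the graph
  let V := Fin (s + 1) × Fin (t + 1)
  let cv : V → ℕ × ℕ := fun v => (v.1.1, v.2.1)
  let AdjN : ℕ × ℕ → ℕ × ℕ → Prop := fun p q => Blk s t α β p ∧ Blk s t α β q ∧ adj8 p q
  have hAdjN_symm : ∀ p q, AdjN p q → AdjN q p := by
    rintro p q ⟨h1, h2, h3, h4, h5⟩
    exact ⟨h2, h1, Ne.symm h3, by rwa [Nat.dist_comm], by rwa [Nat.dist_comm]⟩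
  let G : SimpleGraph V :=
    { Adj := fun u v => AdjN (cv u) (cv v)
      symm := ⟨fun u v h => hAdjN_symm _ _ h⟩
      loopless := ⟨fun u h => h.2.2.1 rfl⟩ }
  letI : DecidableRel G.Adj := fun _ _ => Classical.dec _
  have hGadj : ∀ u w : V, G.Adj u w ↔ AdjN (cv u) (cv w) := fun _ _ => Iff.rfl
  -- making vertices
  let mkc : ℕ → ℕ → V := fun i j =>
    (⟨i % (s + 1), Nat.mod_lt _ (by omega)⟩, ⟨j % (t + 1), Nat.mod_lt _ (by omega)⟩)
  have hcv : ∀ i j, i ≤ s → j ≤ t → cv (mkc i j) = (i, j) := by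
    intro i j hi hj
    simp [cv, mkc, Nat.mod_eq_of_lt (by omega : i < s + 1), Nat.mod_eq_of_lt (by omega : j < t + 1)]
  have hveq : ∀ (w : V) (i j : ℕ), i ≤ s → j ≤ t → cv w = (i, j) → w = mkc i j := by
    intro w i j hi hj h
    have h1 : (w.1 : ℕ) = i := congrArg Prod.fst h
    have h2 : (w.2 : ℕ) = j := congrArg Prod.snd h
    have := hcv i j hi hj
    have g1 : ((mkc i j).1 : ℕ) = i := congrArg Prod.fst this
    have g2 : ((mkc i j).2 : ℕ) = j := congrArg Prod.snd this
    exact Prod.ext (Fin.ext (by rw [h1, g1])) (Fin.ext (by rw [h2, g2]))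
  have hmkc_ne : ∀ i j i' j', i ≤ s → j ≤ t → i' ≤ s → j' ≤ t → (i ≠ i' ∨ j ≠ j') →
      mkc i j ≠ mkc i' j' := by
    intro i j i' j' hi hj hi' hj' hne heq
    have := hcv i j hi hj
    rw [heq, hcv i' j' hi' hj'] at this
    rcases hne with h | h
    · exact h (congrArg Prod.fst this).symm
    · exact h (congrArg Prod.snd this).symm
  -- degree via explicit superset of neighbors
  have degf : ∀ (v : V) (D : Finset V), (∀ w, G.Adj v w → w ∈ D) →
      G.degree v = ∑ w ∈ D, if G.Adj v w then 1 else 0 := by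
    intro v D hD
    rw [← SimpleGraph.card_neighborFinset_eq_degree, SimpleGraph.neighborFinset_eq_filter,
      Finset.card_filter]
    exact (Finset.sum_subset (Finset.subset_univ D) (fun x _ hx => by
      simp only [ite_eq_right_iff]
      intro h; exact absurd (hD x h) hx)).symm
  -- neighbor coordinates
  have hnbr : ∀ (v w : V) (i j : ℕ), cv v = (i, j) → G.Adj v w →
      Blk s t α β (cv w) ∧ ((cv w).1 = i + 1 ∨ i = (cv w).1 + 1) ∧
        ((cv w).2 = j + 1 ∨ j = (cv w).2 + 1) := by
    intro v w i j hcvv h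
    obtain ⟨h1, h2, h3⟩ := h
    have hd := blk_diag s t α β hαstep hβstep (cv v) (cv w) h1 h2 h3
    rw [hcvv] at hd
    exact ⟨h2, hd.1.symm, hd.2.symm⟩
  -- adjacency evaluation for explicit candidates
  have hadj_iff : ∀ (i j i' j' : ℕ), Blk s t α β (i, j) → 1 ≤ i' → i' ≤ s → 1 ≤ j' → j' ≤ t →
      (i' = i + 1 ∨ i = i' + 1) → (j' = j + 1 ∨ j = j' + 1) →
      (G.Adj (mkc i j) (mkc i' j') ↔ α i' = β j') := by
    intro i j i' j' hb hi'1 hi's hj'1 hj't hii hjj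
    obtain ⟨h1, h2, h3, h4, h5⟩ := hb
    rw [hGadj, hcv i j (by omega) (by omega), hcv i' j' (by omega) (by omega)]
    constructor
    · exact fun h => h.2.1.2.2.2.2
    · intro h
      refine ⟨⟨h1, h2, h3, h4, h5⟩, ⟨hi'1, hi's, hj'1, hj't, h⟩, ?_, ?_, ?_⟩
      · intro hpq
        rw [Prod.mk.injEq] at hpq
        omega
      · rw [dist_le_one_iff]; simp only []; omega
      · rw [dist_le_one_iff]; simp only []; omega
  have hsel : ∀ (P Q : Prop) [Decidable P], (P ↔ Q) →
      ((Q ∧ (if P then 1 else 0) = 1) ∨ (¬ Q ∧ (if P then 1 else 0) = 0)) := by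
    intro P Q inst h
    by_cases hq : Q
    · left; exact ⟨hq, if_pos (h.mpr hq)⟩
    · right; exact ⟨hq, if_neg (fun hp => hq (h.mp hp))⟩
  have hB11 : Blk s t α β (1, 1) := ⟨by omega, by omega, by omega, by omega, by rw [hα1, hβ1]⟩
  have hB1t : Blk s t α β (1, t) := ⟨by omega, by omega, by omega, by omega, by rw [hα1, hβt]⟩
  -- degree of the two corners
  have hdeg11 : G.degree (mkc 1 1) = 1 := by
    rw [degf (mkc 1 1) {mkc 2 2} ?hD11]
    · rw [Finset.sum_singleton, if_pos ((hadj_iff 1 1 2 2 hB11 (by omega) (by omega) (by omega)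
        (by omega) (by omega) (by omega)).mpr (by rw [hα2, hβ2]))]
    case hD11 =>
      intro w hw
      have h := hnbr (mkc 1 1) w 1 1 (hcv 1 1 (by omega) (by omega)) hw
      obtain ⟨⟨w1, w2, w3, w4, w5⟩, hr, hc⟩ := h
      have : w = mkc 2 2 := hveq w 2 2 (by omega) (by omega)
        (Prod.ext (by omega) (by omega))
      simp [this]
  have hdeg1t : G.degree (mkc 1 t) = 1 := by
    rw [degf (mkc 1 t) {mkc 2 (t - 1)} ?hD1t]
    · rw [Finset.sum_singleton, if_pos ((hadj_iff 1 t 2 (t - 1) hB1t (by omega) (by omega)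
        (by omega) (by omega) (by omega) (by omega)).mpr (by rw [hα2, hβt1]))]
    case hD1t =>
      intro w hw
      have h := hnbr (mkc 1 t) w 1 t (hcv 1 t (by omega) (by omega)) hw
      obtain ⟨⟨w1, w2, w3, w4, w5⟩, hr, hc⟩ := h
      have : w = mkc 2 (t - 1) := hveq w 2 (t - 1) (by omega) (by omega)
        (Prod.ext (by omega) (by omega))
      simp [this]
  -- all other vertices have even degree
  have hmain : ∀ v : V, v ≠ mkc 1 1 → v ≠ mkc 1 t → Even (G.degree v) := by
    intro v hv1 hvt
    obtain ⟨⟨i, hilt⟩, ⟨j, hjlt⟩⟩ := v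
    by_cases hgv : Blk s t α β (i, j)
    · obtain ⟨hi1, his, hj1, hjt, hij⟩ := hgv
      have hij : α i = β j := hij
      have hi1 : 1 ≤ i := hi1
      have his : i ≤ s := his
      have hj1 : 1 ≤ j := hj1
      have hjt : j ≤ t := hjt
      have hgv' : Blk s t α β (i, j) := ⟨hi1, his, hj1, hjt, hij⟩
      have hveqv : (⟨⟨i, hilt⟩, ⟨j, hjlt⟩⟩ : V) = mkc i j :=
        hveq _ i j (by omega) (by omega) rfl
      rcases (Nat.lt_or_ge i s).symm with hstop | hbig
      case _ =>
        -- i = s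
        have hieq : i = s := by omega
        have hjint : 1 < j ∧ j < t := by
          constructor
          · rcases Nat.eq_or_lt_of_le hj1 with h | h
            · exfalso; rw [hieq, hαs, ← h, hβ1] at hij; omega
            · omega
          · rcases Nat.eq_or_lt_of_le hjt with h | h
            · exfalso; rw [hieq, hαs, h, hβt] at hij; omega
            · omega
        have hβjM : β j = M := by rw [← hij, hieq, hαs]
        have hbm : β (j - 1) + 1 = M := by
          have h := hβstep (j - 1) (by omega) (by omega)
          have h2 := hβub (j - 1) (by omega) (by omega)
          rw [show j - 1 + 1 = j by omega] at h
          omega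
        have hbp : β (j + 1) + 1 = M := by
          have h := hβstep j (by omega) (by omega)
          have h2 := hβub (j + 1) (by omega) (by omega)
          omega
        rw [hveqv, degf (mkc i j) {mkc (s - 1) (j - 1), mkc (s - 1) (j + 1)} ?hDs]
        · rw [Finset.sum_insert (by
            simp only [Finset.mem_singleton]
            exact hmkc_ne _ _ _ _ (by omega) (by omega) (by omega) (by omega) (by omega)),
            Finset.sum_singleton]
          rw [if_pos ((hadj_iff i j (s - 1) (j - 1) hgv' (by omega) (by omega) (by omega)
              (by omega) (by omega) (by omega)).mpr (by omega)),
            if_pos ((hadj_iff i j (s - 1) (j + 1) hgv' (by omega) (by omega) (by omega)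
              (by omega) (by omega) (by omega)).mpr (by omega))]
          exact ⟨1, rfl⟩
        case hDs =>
          intro w hw
          have h := hnbr (mkc i j) w i j (hcv i j (by omega) (by omega)) hw
          obtain ⟨⟨w1, w2, w3, w4, w5⟩, hr, hc⟩ := h
          have hw1 : (cv w).1 = s - 1 := by omega
          rcases hc with hc | hc
          · have : w = mkc (s - 1) (j + 1) := hveq w (s - 1) (j + 1) (by omega) (by omega)
              (Prod.ext (by omega) (by omega))
            simp [this]
          · have : w = mkc (s - 1) (j - 1) := hveq w (s - 1) (j - 1) (by omega) (by omega)
              (Prod.ext (by omega) (by omega))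
            simp [this]
      rcases Nat.eq_or_lt_of_le hi1 with hi1e | hi1g
      · -- i = 1
        have hβj1 : β j = 1 := by rw [← hij, ← hi1e, hα1]
        have hjint : 1 < j ∧ j < t := by
          constructor
          · rcases Nat.eq_or_lt_of_le hj1 with h | h
            · exact absurd (hveq _ 1 1 (by omega) (by omega)
                (Prod.ext (show i = 1 by omega) (show j = 1 by omega))) hv1
            · omega
          · rcases Nat.eq_or_lt_of_le hjt with h | h
            · exact absurd (hveq _ 1 t (by omega) (by omega)
                (Prod.ext (show i = 1 by omega) (show j = t by omega))) hvt
            · omega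
        have hbm : β (j - 1) = 2 := by
          have h := hβstep (j - 1) (by omega) (by omega)
          have h2 := hβlb (j - 1) (by omega) (by omega)
          rw [show j - 1 + 1 = j by omega] at h
          omega
        have hbp : β (j + 1) = 2 := by
          have h := hβstep j (by omega) (by omega)
          have h2 := hβlb (j + 1) (by omega) (by omega)
          omega
        rw [hveqv, degf (mkc i j) {mkc 2 (j - 1), mkc 2 (j + 1)} ?hD1]
        · rw [Finset.sum_insert (by
            simp only [Finset.mem_singleton]
            exact hmkc_ne _ _ _ _ (by omega) (by omega) (by omega) (by omega) (by omega)),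
            Finset.sum_singleton]
          rw [if_pos ((hadj_iff i j 2 (j - 1) hgv' (by omega) (by omega) (by omega)
              (by omega) (by omega) (by omega)).mpr (by rw [hα2, hbm])),
            if_pos ((hadj_iff i j 2 (j + 1) hgv' (by omega) (by omega) (by omega)
              (by omega) (by omega) (by omega)).mpr (by rw [hα2, hbp]))]
          exact ⟨1, rfl⟩
        case hD1 =>
          intro w hw
          have h := hnbr (mkc i j) w i j (hcv i j (by omega) (by omega)) hw
          obtain ⟨⟨w1, w2, w3, w4, w5⟩, hr, hc⟩ := h
          have hw1 : (cv w).1 = 2 := by omega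
          rcases hc with hc | hc
          · have : w = mkc 2 (j + 1) := hveq w 2 (j + 1) (by omega) (by omega)
              (Prod.ext (by omega) (by omega))
            simp [this]
          · have : w = mkc 2 (j - 1) := hveq w 2 (j - 1) (by omega) (by omega)
              (Prod.ext (by omega) (by omega))
            simp [this]
      · -- 1 < i < s
        rcases Nat.eq_or_lt_of_le hj1 with hj1e | hj1g
        · -- j = 1
          have hαi : α i = 1 := by rw [hij, ← hj1e, hβ1]
          have ham : α (i - 1) = 2 := by
            have h := hαstep (i - 1) (by omega) (by omega)
            have h2 := hαlb (i - 1) (by omega) (by omega)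
            rw [show i - 1 + 1 = i by omega] at h
            omega
          have hap : α (i + 1) = 2 := by
            have h := hαstep i (by omega) (by omega)
            have h2 := hαlb (i + 1) (by omega) (by omega)
            omega
          rw [hveqv, degf (mkc i j) {mkc (i - 1) 2, mkc (i + 1) 2} ?hDc1]
          · rw [Finset.sum_insert (by
              simp only [Finset.mem_singleton]
              exact hmkc_ne _ _ _ _ (by omega) (by omega) (by omega) (by omega) (by omega)),
              Finset.sum_singleton]
            rw [if_pos ((hadj_iff i j (i - 1) 2 hgv' (by omega) (by omega) (by omega)
                (by omega) (by omega) (by omega)).mpr (by rw [ham, hβ2])),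
              if_pos ((hadj_iff i j (i + 1) 2 hgv' (by omega) (by omega) (by omega)
                (by omega) (by omega) (by omega)).mpr (by rw [hap, hβ2]))]
            exact ⟨1, rfl⟩
          case hDc1 =>
            intro w hw
            have h := hnbr (mkc i j) w i j (hcv i j (by omega) (by omega)) hw
            obtain ⟨⟨w1, w2, w3, w4, w5⟩, hr, hc⟩ := h
            have hw2 : (cv w).2 = 2 := by omega
            rcases hr with hr | hr
            · have : w = mkc (i + 1) 2 := hveq w (i + 1) 2 (by omega) (by omega)
                (Prod.ext (by omega) (by omega))
              simp [this]
            · have : w = mkc (i - 1) 2 := hveq w (i - 1) 2 (by omega) (by omega)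
                (Prod.ext (by omega) (by omega))
              simp [this]
        · rcases Nat.eq_or_lt_of_le hjt with hjte | hjtg
          · -- j = t
            have hαi : α i = 1 := by rw [hij, hjte, hβt]
            have ham : α (i - 1) = 2 := by
              have h := hαstep (i - 1) (by omega) (by omega)
              have h2 := hαlb (i - 1) (by omega) (by omega)
              rw [show i - 1 + 1 = i by omega] at h
              omega
            have hap : α (i + 1) = 2 := by
              have h := hαstep i (by omega) (by omega)
              have h2 := hαlb (i + 1) (by omega) (by omega)
              omega
            rw [hveqv, degf (mkc i j) {mkc (i - 1) (t - 1), mkc (i + 1) (t - 1)} ?hDct]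
            · rw [Finset.sum_insert (by
                simp only [Finset.mem_singleton]
                exact hmkc_ne _ _ _ _ (by omega) (by omega) (by omega) (by omega) (by omega)),
                Finset.sum_singleton]
              rw [if_pos ((hadj_iff i j (i - 1) (t - 1) hgv' (by omega) (by omega) (by omega)
                  (by omega) (by omega) (by omega)).mpr (by rw [ham, hβt1])),
                if_pos ((hadj_iff i j (i + 1) (t - 1) hgv' (by omega) (by omega) (by omega)
                  (by omega) (by omega) (by omega)).mpr (by rw [hap, hβt1]))]
              exact ⟨1, rfl⟩
            case hDct =>
              intro w hw
              have h := hnbr (mkc i j) w i j (hcv i j (by omega) (by omega)) hw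
              obtain ⟨⟨w1, w2, w3, w4, w5⟩, hr, hc⟩ := h
              have hw2 : (cv w).2 = t - 1 := by omega
              rcases hr with hr | hr
              · have : w = mkc (i + 1) (t - 1) := hveq w (i + 1) (t - 1) (by omega) (by omega)
                  (Prod.ext (by omega) (by omega))
                simp [this]
              · have : w = mkc (i - 1) (t - 1) := hveq w (i - 1) (t - 1) (by omega) (by omega)
                  (Prod.ext (by omega) (by omega))
                simp [this]
          · -- interior
            have hstepa := hαstep i (by omega) (by omega)
            have hstepa' := hαstep (i - 1) (by omega) (by omega)
            rw [show i - 1 + 1 = i by omega] at hstepa'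
            have hstepb := hβstep j (by omega) (by omega)
            have hstepb' := hβstep (j - 1) (by omega) (by omega)
            rw [show j - 1 + 1 = j by omega] at hstepb'
            rw [hveqv, degf (mkc i j)
              {mkc (i + 1) (j + 1), mkc (i - 1) (j - 1), mkc (i + 1) (j - 1),
                mkc (i - 1) (j + 1)} ?hDint]
            · rw [Finset.sum_insert (by
                simp only [Finset.mem_insert, Finset.mem_singleton]
                push_neg
                refine ⟨?_, ?_, ?_⟩ <;>
                  exact hmkc_ne _ _ _ _ (by omega) (by omega) (by omega) (by omega) (by omega)),
                Finset.sum_insert (by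
                simp only [Finset.mem_insert, Finset.mem_singleton]
                push_neg
                refine ⟨?_, ?_⟩ <;>
                  exact hmkc_ne _ _ _ _ (by omega) (by omega) (by omega) (by omega) (by omega)),
                Finset.sum_insert (by
                simp only [Finset.mem_singleton]
                exact hmkc_ne _ _ _ _ (by omega) (by omega) (by omega) (by omega) (by omega)),
                Finset.sum_singleton]
              have e1 := hsel _ (α (i + 1) = β (j + 1))
                (hadj_iff i j (i + 1) (j + 1) hgv' (by omega) (by omega) (by omega) (by omega)
                  (by omega) (by omega))
              have e2 := hsel _ (α (i - 1) = β (j - 1))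
                (hadj_iff i j (i - 1) (j - 1) hgv' (by omega) (by omega) (by omega) (by omega)
                  (by omega) (by omega))
              have e3 := hsel _ (α (i + 1) = β (j - 1))
                (hadj_iff i j (i + 1) (j - 1) hgv' (by omega) (by omega) (by omega) (by omega)
                  (by omega) (by omega))
              have e4 := hsel _ (α (i - 1) = β (j + 1))
                (hadj_iff i j (i - 1) (j + 1) hgv' (by omega) (by omega) (by omega) (by omega)
                  (by omega) (by omega))
              have hpar := parity4 (α i) (α (i + 1)) (α (i - 1)) (β (j + 1)) (β (j - 1))
                (by omega) (by omega) (by omega) (by omega) _ _ _ _ e1 e2 e3 e4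
              rw [← add_assoc, ← add_assoc]
              exact hpar
            case hDint =>
              intro w hw
              have h := hnbr (mkc i j) w i j (hcv i j (by omega) (by omega)) hw
              obtain ⟨⟨w1, w2, w3, w4, w5⟩, hr, hc⟩ := h
              simp only [Finset.mem_insert, Finset.mem_singleton]
              rcases hr with hr | hr <;> rcases hc with hc | hc
              · exact Or.inl (hveq w (i + 1) (j + 1) (by omega) (by omega)
                  (Prod.ext (by omega) (by omega)))
              · exact Or.inr (Or.inr (Or.inl (hveq w (i + 1) (j - 1) (by omega) (by omega)
                  (Prod.ext (by omega) (by omega)))))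
              · exact Or.inr (Or.inr (Or.inr (hveq w (i - 1) (j + 1) (by omega) (by omega)
                  (Prod.ext (by omega) (by omega)))))
              · exact Or.inr (Or.inl (hveq w (i - 1) (j - 1) (by omega) (by omega)
                  (Prod.ext (by omega) (by omega))))
    · rw [degf _ ∅ (fun w hw => absurd hw.1 hgv)]
      simp

  -- restricted graph on the component of (1,1)
  let G' : SimpleGraph V :=
    { Adj := fun u w => G.Adj u w ∧ G.Reachable (mkc 1 1) u ∧ G.Reachable (mkc 1 1) w
      symm := ⟨fun u w h => ⟨(h.1.symm), h.2.2, h.2.1⟩⟩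
      loopless := ⟨fun u h => G.ne_of_adj h.1 rfl⟩ }
  letI : DecidableRel G'.Adj := fun _ _ => Classical.dec _
  have hdeg' : ∀ u, G.Reachable (mkc 1 1) u → G'.degree u = G.degree u := by
    intro u hu
    rw [← SimpleGraph.card_neighborFinset_eq_degree, ← SimpleGraph.card_neighborFinset_eq_degree]
    congr 1
    ext w
    simp only [SimpleGraph.mem_neighborFinset]
    exact ⟨fun h => h.1, fun h => ⟨h, hu, hu.trans (SimpleGraph.Adj.reachable (show G.Adj u w from h))⟩⟩
  have hdeg0 : ∀ u, ¬ G.Reachable (mkc 1 1) u → G'.degree u = 0 := by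
    intro u hu
    rw [← SimpleGraph.card_neighborFinset_eq_degree, Finset.card_eq_zero]
    ext w
    simp only [SimpleGraph.mem_neighborFinset, Finset.notMem_empty, iff_false]
    exact fun h => hu h.2.1
  have heven := G'.even_card_odd_degree_vertices
  have h11 : (mkc 1 1) ∈ Finset.univ.filter (fun u => Odd (G'.degree u)) := by
    simp only [Finset.mem_filter, Finset.mem_univ, true_and]
    rw [hdeg' _ (SimpleGraph.Reachable.refl _), hdeg11]
    exact odd_one
  have hsub : Finset.univ.filter (fun u => Odd (G'.degree u)) ⊆ {mkc 1 1, mkc 1 t} := by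
    intro u hu
    simp only [Finset.mem_filter, Finset.mem_univ, true_and] at hu
    simp only [Finset.mem_insert, Finset.mem_singleton]
    by_contra hc
    push_neg at hc
    by_cases hr : G.Reachable (mkc 1 1) u
    · rw [hdeg' _ hr] at hu
      exact (Nat.not_even_iff_odd.mpr hu) (hmain u hc.1 hc.2)
    · rw [hdeg0 _ hr] at hu
      simp at hu
  have h1tS : mkc 1 t ∈ Finset.univ.filter (fun u => Odd (G'.degree u)) := by
    by_contra hns
    have hsing : Finset.univ.filter (fun u => Odd (G'.degree u)) = {mkc 1 1} := by
      apply Finset.Subset.antisymm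
      · intro u hu
        rcases Finset.mem_insert.mp (hsub hu) with h | h
        · simp [h]
        · exact absurd ((Finset.mem_singleton.mp h) ▸ hu) hns
      · exact Finset.singleton_subset_iff.mpr h11
    rw [hsing] at heven
    simp at heven
  have hreach : G.Reachable (mkc 1 1) (mkc 1 t) := by
    simp only [Finset.mem_filter, Finset.mem_univ, true_and] at h1tS
    by_contra hr
    rw [hdeg0 _ hr] at h1tS
    simp at h1tS
  obtain ⟨p⟩ := hreach
  obtain ⟨L, σ, h0, hL, hg, hstep⟩ := reachable_toPath G cv (Blk s t α β)
    (fun u w h => h) p (by rw [hcv 1 1 (by omega) (by omega)]; exact hB11)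
  exact ⟨L, σ, by rw [h0, hcv 1 1 (by omega) (by omega)],
    by rw [hL, hcv 1 t (by omega) (by omega)], hg, hstep⟩


end Core

def dbl (f : ℕ → ℕ) : ℕ → ℕ := fun i =>
  if i % 2 = 1 then 2 * f ((i + 1) / 2) - 1
  else if f (i / 2) = f (i / 2 + 1) then (if f (i / 2) = 1 then 2 else 2 * f (i / 2) - 2)
  else if f (i / 2) ≤ f (i / 2 + 1) then 2 * f (i / 2) else 2 * f (i / 2 + 1)

lemma dbl_odd (f : ℕ → ℕ) (k : ℕ) : dbl f (2 * k + 1) = 2 * f (k + 1) - 1 := by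
  have h1 : (2 * k + 1) % 2 = 1 := by omega
  have h2 : (2 * k + 1 + 1) / 2 = k + 1 := by omega
  simp [dbl, h1, h2]

lemma dbl_odd' (f : ℕ → ℕ) (i : ℕ) (h : i % 2 = 1) : dbl f i = 2 * f ((i + 1) / 2) - 1 := by
  simp [dbl, h]

lemma dbl_one (f : ℕ → ℕ) : dbl f 1 = 2 * f 1 - 1 := by
  simpa using dbl_odd f 0

section dblFacts
variable (f : ℕ → ℕ) (n : ℕ)
    (hstep : ∀ j, 1 ≤ j → j + 1 ≤ n → Nat.dist (f (j + 1)) (f j) ≤ 1)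
    (hlb : ∀ j, 1 ≤ j → j ≤ n → 1 ≤ f j)

include hstep hlb in
lemma dbl_step : ∀ i, 1 ≤ i → i + 1 ≤ 2 * n - 1 →
    dbl f (i + 1) = dbl f i + 1 ∨ dbl f i = dbl f (i + 1) + 1 := by
  intro i hi1 hi2
  rcases Nat.even_or_odd i with ⟨k, hk⟩ | ⟨k, hk⟩
  · -- i = 2k even, k ≥ 1, i+1 odd
    have hk1 : 1 ≤ k := by omega
    have hkn : k + 1 ≤ n := by omega
    have hd := hstep k (by omega) (by omega)
    have hl1 := hlb k (by omega) (by omega)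
    have hl2 := hlb (k + 1) (by omega) (by omega)
    simp only [Nat.dist] at hd
    have e1 : dbl f (i + 1) = 2 * f (k + 1) - 1 := by
      rw [show i + 1 = 2 * k + 1 by omega, dbl_odd]
    have e2 : dbl f i = if f k = f (k + 1) then (if f k = 1 then 2 else 2 * f k - 2)
        else if f k ≤ f (k + 1) then 2 * f k else 2 * f (k + 1) := by
      have h1 : i % 2 = 0 := by omega
      have h2 : i / 2 = k := by omega
      simp [dbl, h1, h2]
    rw [e1, e2]
    split_ifs <;> first | omega | exact (by assumption : False).elim
  · -- i = 2k+1 odd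
    have hkn : k + 2 ≤ n := by omega
    have hd := hstep (k + 1) (by omega) (by omega)
    rw [show k + 1 + 1 = k + 2 by omega] at hd
    have hl1 := hlb (k + 1) (by omega) (by omega)
    have hl2 := hlb (k + 2) (by omega) (by omega)
    simp only [Nat.dist] at hd
    have e1 : dbl f i = 2 * f (k + 1) - 1 := by rw [hk, show 2 * k + 1 = 2 * k + 1 from rfl, dbl_odd]
    have e2 : dbl f (i + 1) = if f (k + 1) = f (k + 2) then (if f (k + 1) = 1 then 2 else 2 * f (k + 1) - 2)
        else if f (k + 1) ≤ f (k + 2) then 2 * f (k + 1) else 2 * f (k + 2) := by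
      have h1 : (i + 1) % 2 = 0 := by omega
      have h2 : (i + 1) / 2 = k + 1 := by omega
      have h3 : (i + 1) / 2 + 1 = k + 2 := by omega
      simp [dbl, h1, h2, h3]
    rw [e1, e2]
    split_ifs <;> first | omega | exact (by assumption : False).elim

include hlb in
lemma dbl_lb : ∀ i, 1 ≤ i → i ≤ 2 * n - 1 → 1 ≤ dbl f i := by
  intro i hi1 hi2
  rcases Nat.even_or_odd i with ⟨k, hk⟩ | ⟨k, hk⟩
  · have hl1 := hlb k (by omega) (by omega)
    have hl2 := hlb (k + 1) (by omega) (by omega)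
    have h1 : i % 2 = 0 := by omega
    have h2 : i / 2 = k := by omega
    simp only [dbl, h1, h2]
    split_ifs <;> first | omega | exact (by assumption : False).elim
  · have hl1 := hlb (k + 1) (by omega) (by omega)
    rw [hk, dbl_odd]
    omega

include hlb in
lemma dbl_ub (M : ℕ) (hM : 2 ≤ M) (hub : ∀ j, 1 ≤ j → j ≤ n → f j ≤ M) :
    ∀ i, 1 ≤ i → i ≤ 2 * n - 1 → dbl f i ≤ 2 * M - 1 := by
  intro i hi1 hi2
  rcases Nat.even_or_odd i with ⟨k, hk⟩ | ⟨k, hk⟩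
  · have hl1 := hlb k (by omega) (by omega)
    have hl2 := hlb (k + 1) (by omega) (by omega)
    have hu1 := hub k (by omega) (by omega)
    have hu2 := hub (k + 1) (by omega) (by omega)
    have h1 : i % 2 = 0 := by omega
    have h2 : i / 2 = k := by omega
    simp only [dbl, h1, h2]
    split_ifs <;> first | omega | exact (by assumption : False).elim
  · have hu1 := hub (k + 1) (by omega) (by omega)
    rw [hk, dbl_odd]
    omega

end dblFacts

theorem black_path_corner_to_corner (r s t : ℕ) (hr : 1 ≤ r) (hs : 1 ≤ s) (ht : 1 ≤ t)
    (α β : ℕ → ℕ)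
    (hαmem : ∀ i ∈ Finset.Icc 1 s, α i ∈ Finset.Icc 1 r)
    (hβmem : ∀ j ∈ Finset.Icc 1 t, β j ∈ Finset.Icc 1 r)
    (hαstep : ∀ i, 1 ≤ i → i + 1 ≤ s → Nat.dist (α (i + 1)) (α i) ≤ 1)
    (hβstep : ∀ j, 1 ≤ j → j + 1 ≤ t → Nat.dist (β (j + 1)) (β j) ≤ 1)
    (hα1 : α 1 = 1) (hβ1 : β 1 = 1) (hβt : β t = 1)
    (hrng : ∀ j ∈ Finset.Icc 1 t, ∃ i ∈ Finset.Icc 1 s, α i = β j) :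
    PathBetween adj8 (fun c => c ∈ board s t ∧ α c.1 = β c.2)
      {((1 : ℕ), (1 : ℕ))} {((1 : ℕ), t)} := by
  classical
  have hαlb : ∀ i, 1 ≤ i → i ≤ s → 1 ≤ α i := fun i h1 h2 =>
    (Finset.mem_Icc.mp (hαmem i (Finset.mem_Icc.mpr ⟨h1, h2⟩))).1
  have hβlb : ∀ j, 1 ≤ j → j ≤ t → 1 ≤ β j := fun j h1 h2 =>
    (Finset.mem_Icc.mp (hβmem j (Finset.mem_Icc.mpr ⟨h1, h2⟩))).1
  have hnet : (Finset.Icc 1 t).Nonempty := ⟨1, Finset.mem_Icc.mpr ⟨le_refl 1, ht⟩⟩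
  set M := (Finset.Icc 1 t).sup' hnet β with hMdef
  obtain ⟨j₀, hj₀mem, hj₀⟩ := Finset.exists_mem_eq_sup' hnet β
  have hβub : ∀ j, 1 ≤ j → j ≤ t → β j ≤ M := fun j h1 h2 =>
    Finset.le_sup' β (Finset.mem_Icc.mpr ⟨h1, h2⟩)
  rcases Nat.lt_or_ge M 2 with hM1 | hM2
  · -- M ≤ 1 : β is constantly 1, walk along the first row
    have hβall : ∀ j, 1 ≤ j → j ≤ t → β j = 1 := fun j h1 h2 => by
      have := hβlb j h1 h2; have := hβub j h1 h2; omega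
    refine ⟨t - 1, fun k => (1, k + 1), by norm_num, ?_, ?_, ?_⟩
    · show ((1 : ℕ), t - 1 + 1) ∈ ({((1 : ℕ), t)} : Set (ℕ × ℕ))
      rw [show t - 1 + 1 = t by omega]
      rfl
    · intro i hi
      refine ⟨?_, ?_⟩
      · simp only [board, Set.mem_setOf_eq]
        refine ⟨by omega, by omega, by omega, by omega⟩
      · show α 1 = β (i + 1)
        rw [hα1, hβall (i + 1) (by omega) (by omega)]
    · intro i hi
      refine ⟨?_, ?_, ?_⟩
      · simp only [ne_eq, Prod.mk.injEq, not_and]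
        intro _; omega
      · simp [Nat.dist]
      · simp [Nat.dist]
  · -- M ≥ 2
    obtain ⟨i₀, hi₀mem, hi₀⟩ := hrng j₀ hj₀mem
    rw [Finset.mem_Icc] at hi₀mem
    rw [Finset.mem_Icc] at hj₀mem
    have hMj : M = β j₀ := by rw [hMdef, hj₀]
    have hαi₀ : α i₀ = M := by rw [hi₀, ← hMj]
    have hi₀2 : 2 ≤ i₀ := by
      rcases Nat.eq_or_lt_of_le hi₀mem.1 with h | h
      · exfalso; rw [← h, hα1] at hαi₀; omega
      · omega
    have hj₀int : 2 ≤ j₀ ∧ j₀ < t := by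
      constructor
      · rcases Nat.eq_or_lt_of_le hj₀mem.1 with h | h
        · exfalso; rw [hMj, ← h, hβ1] at hM2; omega
        · omega
      · rcases Nat.eq_or_lt_of_le hj₀mem.2 with h | h
        · exfalso; rw [hMj, h, hβt] at hM2; omega
        · omega
    have hAstep := dbl_step α s hαstep hαlb
    have hBstep := dbl_step β t hβstep hβlb
    have hAlb := dbl_lb α s hαlb
    have hBlb := dbl_lb β t hβlb
    have hBub := dbl_ub β t hβlb M hM2 hβub
    set A := dbl α with hA
    set Bb := dbl β with hB
    have hA1 : A 1 = 1 := by rw [hA, dbl_one, hα1]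
    have hB1 : Bb 1 = 1 := by rw [hB, dbl_one, hβ1]
    have hBt : Bb (2 * t - 1) = 1 := by
      rw [hB, show 2 * t - 1 = 2 * (t - 1) + 1 by omega, dbl_odd,
        show t - 1 + 1 = t by omega, hβt]
    have hex : ∃ m, 1 ≤ m ∧ m ≤ 2 * s - 1 ∧ A m = 2 * M - 1 := by
      refine ⟨2 * i₀ - 1, by omega, by omega, ?_⟩
      rw [hA, show 2 * i₀ - 1 = 2 * (i₀ - 1) + 1 by omega, dbl_odd,
        show i₀ - 1 + 1 = i₀ by omega, hαi₀]
    obtain ⟨s', hs'def⟩ : ∃ n, Nat.find hex = n := ⟨_, rfl⟩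
    obtain ⟨hs'1, hs'2, hs'3⟩ := Nat.find_spec hex
    rw [hs'def] at hs'1 hs'2 hs'3
    have hmin : ∀ m, m < s' → ¬(1 ≤ m ∧ m ≤ 2 * s - 1 ∧ A m = 2 * M - 1) :=
      fun m hm => Nat.find_min hex (by rw [hs'def]; exact hm)
    have hpre : ∀ m, 1 ≤ m → m ≤ s' → A m ≤ 2 * M - 1 := by
      intro m
      induction m with
      | zero => exact fun h _ => absurd h (by omega)
      | succ k ih =>
        intro h1 h2
        rcases Nat.eq_zero_or_pos k with rfl | hk
        · rw [show (0 : ℕ) + 1 = 1 from rfl, hA1]; omega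
        · have ha := ih (by omega) (by omega)
          have hane : A k ≠ 2 * M - 1 := fun hc => hmin k (by omega) ⟨by omega, by omega, hc⟩
          have hst := hAstep k (by omega) (by omega)
          omega
    have hαub' : ∀ m, 1 ≤ m → m < s' → A m + 1 ≤ 2 * M - 1 := by
      intro m h1 h2
      have h3 := hpre m h1 (by omega)
      have hane : A m ≠ 2 * M - 1 := fun hc => hmin m h2 ⟨h1, by omega, hc⟩
      omega
    have hA2 : A 2 = 2 := by
      have h1 := hAstep 1 (by omega) (by omega)
      norm_num at h1
      have h2 := hAlb 2 (by omega) (by omega)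
      omega
    have hs'3ge : 3 ≤ s' := by
      by_contra hcon
      have : s' = 1 ∨ s' = 2 := by omega
      rcases this with h | h <;> rw [h] at hs'3 <;> omega
    obtain ⟨L, σ, hσ0, hσL, hσg, hσadj⟩ := core s' (2 * t - 1) (2 * M - 1) A Bb
      (by omega) hs'3ge (by omega) hA1 hs'3 (fun i h1 h2 => hAlb i h1 (by omega)) hαub'
      hB1 hBt hBlb hBub
      (fun i h1 h2 => hAstep i h1 (by omega)) hBstep
    have hdsteps : ∀ k, k < L → ((σ k).1 = (σ (k + 1)).1 + 1 ∨ (σ (k + 1)).1 = (σ k).1 + 1) ∧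
        ((σ k).2 = (σ (k + 1)).2 + 1 ∨ (σ (k + 1)).2 = (σ k).2 + 1) := fun k hk =>
      blk_diag s' (2 * t - 1) A Bb (fun i h1 h2 => hAstep i h1 (by omega)) hBstep
        _ _ (hσg k (by omega)) (hσg (k + 1) (by omega)) (hσadj k hk)
    have hparity : ∀ k, k ≤ L → (σ k).1 % 2 = (k + 1) % 2 ∧ (σ k).2 % 2 = (k + 1) % 2 := by
      intro k
      induction k with
      | zero =>
        intro _
        rw [hσ0]
        exact ⟨rfl, rfl⟩
      | succ k ih =>
        intro hk
        have hp := ih (by omega)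
        have hd := hdsteps k (by omega)
        omega
    have hLeven : L % 2 = 0 := by
      have hp := hparity L (le_refl L)
      have h2 : ((1 : ℕ), 2 * t - 1).1 % 2 = (L + 1) % 2 := by rw [← hσL]; exact hp.1
      have h3 : ((1 : ℕ), 2 * t - 1).1 = 1 := rfl
      rw [h3] at h2
      omega
    refine pathBetween_of_lazy _ {((1 : ℕ), t)} (L / 2)
      (fun k => (((σ (2 * k)).1 + 1) / 2, ((σ (2 * k)).2 + 1) / 2))
      {((1 : ℕ), (1 : ℕ))} ?_ ?_ ?_ ?_
    · show ((((σ 0).1 + 1) / 2, ((σ 0).2 + 1) / 2) : ℕ × ℕ) ∈ _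
      rw [hσ0]
      norm_num
    · show ((((σ (2 * (L / 2))).1 + 1) / 2, ((σ (2 * (L / 2))).2 + 1) / 2) : ℕ × ℕ) ∈ _
      rw [show 2 * (L / 2) = L by omega, hσL]
      have h4 : ((1 : ℕ) + 1) / 2 = 1 := rfl
      have h5 : (2 * t - 1 + 1) / 2 = t := by omega
      show ((((1 : ℕ), 2 * t - 1).1 + 1) / 2, (((1 : ℕ), 2 * t - 1).2 + 1) / 2) ∈
        ({((1 : ℕ), t)} : Set (ℕ × ℕ))
      simp only [Set.mem_singleton_iff, Prod.mk.injEq]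
      exact ⟨by trivial, by omega⟩
    · intro k hk
      obtain ⟨hr1, hr2, hc1, hc2, hval⟩ := hσg (2 * k) (by omega)
      have hpar := hparity (2 * k) (by omega)
      have hrodd : (σ (2 * k)).1 % 2 = 1 := by omega
      have hcodd : (σ (2 * k)).2 % 2 = 1 := by omega
      have e1 : A (σ (2 * k)).1 = 2 * α (((σ (2 * k)).1 + 1) / 2) - 1 := dbl_odd' α _ hrodd
      have e2 : Bb (σ (2 * k)).2 = 2 * β (((σ (2 * k)).2 + 1) / 2) - 1 := dbl_odd' β _ hcodd
      have hb1 : 1 ≤ α (((σ (2 * k)).1 + 1) / 2) := hαlb _ (by omega) (by omega)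
      have hb2 : 1 ≤ β (((σ (2 * k)).2 + 1) / 2) := hβlb _ (by omega) (by omega)
      refine ⟨?_, ?_⟩
      · simp only [board, Set.mem_setOf_eq]
        refine ⟨by omega, by omega, by omega, by omega⟩
      · show α (((σ (2 * k)).1 + 1) / 2) = β (((σ (2 * k)).2 + 1) / 2)
        omega
    · intro k hk
      have hd1 := hdsteps (2 * k) (by omega)
      have hd2 := hdsteps (2 * k + 1) (by omega)
      rw [show 2 * k + 1 + 1 = 2 * (k + 1) by omega] at hd2
      by_cases heq : ((((σ (2 * k)).1 + 1) / 2, ((σ (2 * k)).2 + 1) / 2) : ℕ × ℕ) =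
          ((((σ (2 * (k + 1))).1 + 1) / 2, ((σ (2 * (k + 1))).2 + 1) / 2) : ℕ × ℕ)
      · exact Or.inl heq
      · refine Or.inr ⟨heq, ?_, ?_⟩
        · show Nat.dist (((σ (2 * k)).1 + 1) / 2) (((σ (2 * (k + 1))).1 + 1) / 2) ≤ 1
          simp only [Nat.dist]
          omega
        · show Nat.dist (((σ (2 * k)).2 + 1) / 2) (((σ (2 * (k + 1))).2 + 1) / 2) ≤ 1
          simp only [Nat.dist]
          omega
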